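/- For a positive definite matrix ϖ, the matrix r := -ϖ/2 + (ϖ + (ϖ/2)^2)^{1/2} is positive definite, satisfies r ≤ I, satisfies (I + ϖ^{-1})^{-1} ≤ r, and is a fixed point of the Riccati map: r = (I + (ϖ + r)^{-1})^{-1}. -/

import Mathlib

open Matrix
open scoped Classical

/-- The principal symmetric positive semidefinite square root of a matrix
(junk value `0` if the matrix is not positive semidefinite). -/
noncomputable def psqrt {d : ℕ} (A : Matrix (Fin d) (Fin d) ℝ) : Matrix (Fin d) (Fin d) ℝ :=
  if h : A.PosSemidef then
    (h.1.eigenvectorUnitary : Matrix (Fin d) (Fin d) ℝ) *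
      diagonal (fun i => Real.sqrt (h.1.eigenvalues i)) *
      (star h.1.eigenvectorUnitary : Matrix (Fin d) (Fin d) ℝ)
  else 0

variable {d : ℕ}

private lemma psqrt_psd' {A : Matrix (Fin d) (Fin d) ℝ} (h : A.PosSemidef) :
    (psqrt A).PosSemidef := by
  unfold psqrt
  rw [dif_pos h, star_eq_conjTranspose]
  exact (PosSemidef.diagonal (fun i => Real.sqrt_nonneg _)).mul_mul_conjTranspose_same _

private lemma psqrt_mul_self' {A : Matrix (Fin d) (Fin d) ℝ} (h : A.PosSemidef) :
    psqrt A * psqrt A = A := by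
  unfold psqrt
  rw [dif_pos h]
  have hU : (star h.1.eigenvectorUnitary : Matrix (Fin d) (Fin d) ℝ) *
      (h.1.eigenvectorUnitary : Matrix (Fin d) (Fin d) ℝ) = 1 := Unitary.coe_star_mul_self _
  have hD : diagonal (fun i => Real.sqrt (h.1.eigenvalues i)) *
      diagonal (fun i => Real.sqrt (h.1.eigenvalues i)) = diagonal (RCLike.ofReal ∘ h.1.eigenvalues) := by
    rw [diagonal_mul_diagonal]
    congr 1
    funext i
    simp [Real.mul_self_sqrt (h.eigenvalues_nonneg i)]
  conv_rhs => rw [h.1.spectral_theorem, Unitary.conjStarAlgAut_apply]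
  rw [← hD]
  simp only [Matrix.mul_assoc]
  rw [← Matrix.mul_assoc (star _) _ (diagonal _ * _), hU, Matrix.one_mul]

private lemma commute_inv' {a u : Matrix (Fin d) (Fin d) ℝ} (hu : IsUnit u.det)
    (h : a * u = u * a) : a * u⁻¹ = u⁻¹ * a := by
  have h1 : u * u⁻¹ = 1 := Matrix.mul_nonsing_inv u hu
  have h2 : u⁻¹ * u = 1 := Matrix.nonsing_inv_mul u hu
  calc a * u⁻¹ = (u⁻¹ * u) * a * u⁻¹ := by rw [h2, one_mul]
    _ = u⁻¹ * (u * a) * u⁻¹ := by simp [Matrix.mul_assoc]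
    _ = u⁻¹ * (a * u) * u⁻¹ := by rw [h]
    _ = u⁻¹ * a * (u * u⁻¹) := by simp [Matrix.mul_assoc]
    _ = u⁻¹ * a := by rw [h1, mul_one]

private lemma psd_smul' {c : ℝ} (hc : 0 ≤ c) {A : Matrix (Fin d) (Fin d) ℝ}
    (hA : A.PosSemidef) : (c • A).PosSemidef := by
  refine PosSemidef.of_dotProduct_mulVec_nonneg ?_ (fun x => ?_)
  · unfold Matrix.IsHermitian
    rw [conjTranspose_smul, hA.1]
    simp
  · rw [smul_mulVec, dotProduct_smul, smul_eq_mul]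
    exact mul_nonneg hc (hA.dotProduct_mulVec_nonneg x)

private lemma pd_smul' {c : ℝ} (hc : 0 < c) {A : Matrix (Fin d) (Fin d) ℝ}
    (hA : A.PosDef) : (c • A).PosDef := by
  refine PosDef.of_dotProduct_mulVec_pos ?_ (fun x hx => ?_)
  · unfold Matrix.IsHermitian
    rw [conjTranspose_smul, hA.1]
    simp
  · rw [smul_mulVec, dotProduct_smul, smul_eq_mul]
    exact mul_pos hc (hA.dotProduct_mulVec_pos hx)

private lemma pd_conj' {A : Matrix (Fin d) (Fin d) ℝ} (hA : A.PosDef)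
    {B : Matrix (Fin d) (Fin d) ℝ} (hB : IsUnit B.det) : (Bᴴ * A * B).PosDef := by
  refine PosDef.of_dotProduct_mulVec_pos (isHermitian_conjTranspose_mul_mul B hA.1) (fun x hx => ?_)
  have hBx : B *ᵥ x ≠ 0 := by
    have : Function.Injective (B.mulVec) := mulVec_injective_iff_isUnit.2 (isUnit_iff_isUnit_det _ |>.2 hB)
    intro hc
    exact hx (this (by simpa using hc))
  simpa only [star_mulVec, dotProduct_mulVec, vecMul_vecMul] using hA.dotProduct_mulVec_pos hBx

private lemma pd_of_sq' {s : Matrix (Fin d) (Fin d) ℝ} (hs : s.PosSemidef)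
    (h : (s * s).PosDef) : s.PosDef := by
  refine PosDef.of_dotProduct_mulVec_pos hs.1 (fun x hx => ?_)
  have hsx : s *ᵥ x ≠ 0 := by
    intro hc
    have := h.dotProduct_mulVec_pos hx
    rw [← Matrix.mulVec_mulVec, hc, Matrix.mulVec_zero, dotProduct_zero] at this
    exact lt_irrefl 0 this
  have h1 : star x ⬝ᵥ s *ᵥ x ≠ 0 := fun hc => hsx (hs.dotProduct_mulVec_zero_iff x |>.1 hc)
  exact lt_of_le_of_ne (hs.dotProduct_mulVec_nonneg x) (Ne.symm h1)

private lemma commute_sqrt' {A X : Matrix (Fin d) (Fin d) ℝ} (hA : A.PosDef)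
    (hX : Xᴴ = X) (h : X * A = A * X) :
    X * psqrt A = psqrt A * X := by
  set s := psqrt A with hsdef
  have hs : s.PosSemidef := psqrt_psd' hA.posSemidef
  have hss : s * s = A := psqrt_mul_self' hA.posSemidef
  have hsPD : s.PosDef := pd_of_sq' hs (by rw [hss]; exact hA)
  set D := X * s - s * X with hD
  have hanti : s * D = -(D * s) := by
    have h0 : s * D + D * s = X * A - A * X := by
      rw [hD, ← hss]; noncomm_ring
    rw [h, sub_self] at h0
    exact eq_neg_of_add_eq_zero_left h0
  have hDt : Dᴴ = -D := by
    rw [hD, conjTranspose_sub, conjTranspose_mul, conjTranspose_mul, hX, hs.1, neg_sub]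
  have hmat : Dᴴ * (s * D) = D * (D * s) := by
    rw [hDt, hanti]; noncomm_ring
  have htr : trace (D * (D * s)) = 0 := by
    have h1 : trace (D * (D * s)) = trace ((D * s) * D) := trace_mul_comm D (D * s)
    have h2 : (D * s) * D = -(D * (D * s)) := by
      rw [Matrix.mul_assoc, hanti, mul_neg]
    rw [h2, trace_neg] at h1
    linarith
  have hpsd : (Dᴴ * s * D).PosSemidef := hs.conjTranspose_mul_mul_same D
  have htr0 : trace (Dᴴ * s * D) = 0 := by
    rw [Matrix.mul_assoc, hmat, htr]
  have hdiag0 : ∀ j, (Dᴴ * s * D) j j = 0 := by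
    have hnn : ∀ j ∈ Finset.univ, 0 ≤ (Dᴴ * s * D) j j := by
      intro j _
      have := hpsd.dotProduct_mulVec_nonneg (Pi.single j 1)
      simpa [mulVec_single, single_dotProduct] using this
    intro j
    exact (Finset.sum_eq_zero_iff_of_nonneg hnn).1 htr0 j (Finset.mem_univ j)
  have hcol : ∀ j, D *ᵥ Pi.single j 1 = 0 := by
    intro j
    by_contra hc
    have hpos := hsPD.dotProduct_mulVec_pos hc
    have heq : star (Pi.single j (1:ℝ)) ⬝ᵥ (Dᴴ * s * D) *ᵥ Pi.single j 1
        = star (D *ᵥ Pi.single j 1) ⬝ᵥ s *ᵥ (D *ᵥ Pi.single j 1) := by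
      simp only [star_mulVec, dotProduct_mulVec, vecMul_vecMul]
    have hgen : ∀ N : Matrix (Fin d) (Fin d) ℝ,
        star (Pi.single j (1:ℝ)) ⬝ᵥ N *ᵥ Pi.single j 1 = N j j := by
      intro N
      simp [mulVec_single, single_dotProduct]
    have heval : star (Pi.single j (1:ℝ)) ⬝ᵥ (Dᴴ * s * D) *ᵥ Pi.single j 1 = 0 := by
      rw [hgen, hdiag0 j]
    rw [heq] at heval
    rw [heval] at hpos
    exact lt_irrefl 0 hpos
  have hD0 : D = 0 := by
    ext i j
    have := congrFun (hcol j) i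
    simpa [mulVec_single] using this
  have := sub_eq_zero.1 hD0
  exact this

private lemma pd_mul' {A B : Matrix (Fin d) (Fin d) ℝ} (hA : A.PosDef) (hB : B.PosDef)
    (h : A * B = B * A) : (A * B).PosDef := by
  set w := psqrt A with hwdef
  have hw : w.PosSemidef := psqrt_psd' hA.posSemidef
  have hww : w * w = A := psqrt_mul_self' hA.posSemidef
  have hwPD : w.PosDef := pd_of_sq' hw (by rw [hww]; exact hA)
  have hBw : B * w = w * B := commute_sqrt' hA hB.1 h.symm
  have key : A * B = wᴴ * B * w := by
    rw [hw.1]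
    calc A * B = (w * w) * B := by rw [hww]
      _ = w * (w * B) := by rw [Matrix.mul_assoc]
      _ = w * (B * w) := by rw [hBw]
      _ = w * B * w := by rw [Matrix.mul_assoc]
  rw [key]
  exact pd_conj' hB hwPD.det_pos.ne'.isUnit

private lemma sub_psd' {P Q : Matrix (Fin d) (Fin d) ℝ} (hP : Pᴴ = P) (hQ : Qᴴ = Q)
    (hPQ : P * Q = Q * P) (hE : (Q + P).PosDef) (hG : (Q * Q - P * P).PosSemidef) :
    (Q - P).PosSemidef := by
  set e := psqrt (Q + P) with hedef
  have hes : e.PosSemidef := psqrt_psd' hE.posSemidef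
  have hee : e * e = Q + P := psqrt_mul_self' hE.posSemidef
  have hePD : e.PosDef := pd_of_sq' hes (by rw [hee]; exact hE)
  have hdet : IsUnit e.det := hePD.det_pos.ne'.isUnit
  have hcommDE : (Q - P) * (Q + P) = (Q + P) * (Q - P) := by noncomm_ring [hPQ]
  have hcom_e : (Q - P) * e = e * (Q - P) :=
    commute_sqrt' hE (by rw [conjTranspose_sub, hP, hQ]) hcommDE
  have h1 : e * e⁻¹ = 1 := Matrix.mul_nonsing_inv e hdet
  have h2 : e⁻¹ * e = 1 := Matrix.nonsing_inv_mul e hdet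
  have hDE : (Q - P) * (e * e) = Q * Q - P * P := by rw [hee]; noncomm_ring [hPQ]
  have heinvH : (e⁻¹)ᴴ = e⁻¹ := by rw [conjTranspose_nonsing_inv, hes.1]
  have key : (e⁻¹)ᴴ * (Q * Q - P * P) * e⁻¹ = Q - P := by
    rw [heinvH, ← hDE]
    calc e⁻¹ * ((Q - P) * (e * e)) * e⁻¹
        = e⁻¹ * ((Q - P) * e) * (e * e⁻¹) := by simp [Matrix.mul_assoc]
      _ = e⁻¹ * (e * (Q - P)) * 1 := by rw [hcom_e, h1]
      _ = (e⁻¹ * e) * (Q - P) := by simp [Matrix.mul_assoc]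
      _ = Q - P := by rw [h2, one_mul]
  rw [← key]
  exact hG.conjTranspose_mul_mul_same e⁻¹

/-- For a positive definite matrix `ϖ`, the matrix `r := -ϖ/2 + (ϖ + (ϖ/2)²)^{1/2}` is positive
definite, satisfies `r ≤ I` and `(I + ϖ⁻¹)⁻¹ ≤ r` (in the Loewner order), and is a fixed point
of the Riccati map: `r = (I + (ϖ + r)⁻¹)⁻¹`. -/
theorem riccati_closed_form_fixed_point {d : ℕ} (ϖ r : Matrix (Fin d) (Fin d) ℝ)
    (hϖ : ϖ.PosDef)
    (hr : r = (-(1/2 : ℝ)) • ϖ + psqrt (ϖ + ((1/2 : ℝ) • ϖ) * ((1/2 : ℝ) • ϖ))) :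
    r.PosDef ∧
    ((1 : Matrix (Fin d) (Fin d) ℝ) - r).PosSemidef ∧
    (r - (1 + ϖ⁻¹)⁻¹).PosSemidef ∧
    r = (1 + (ϖ + r)⁻¹)⁻¹ := by
  have hϖH : ϖᴴ = ϖ := hϖ.1
  set A : Matrix (Fin d) (Fin d) ℝ := ϖ + ((1/2 : ℝ) • ϖ) * ((1/2 : ℝ) • ϖ) with hAdef
  have h14 : ((1/2 : ℝ) • ϖ) * ((1/2 : ℝ) • ϖ) = (1/4 : ℝ) • (ϖ * ϖ) := by
    rw [Matrix.smul_mul, Matrix.mul_smul, smul_smul]; norm_num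
  have hA : A.PosDef := by
    apply hϖ.add_posSemidef
    rw [h14]
    apply psd_smul' (by norm_num)
    nth_rewrite 1 [← hϖH]
    exact posSemidef_conjTranspose_mul_self ϖ
  have hs_eq : psqrt A = psqrt A := rfl
  set s : Matrix (Fin d) (Fin d) ℝ := psqrt A with hsdef
  have hs : s.PosSemidef := psqrt_psd' hA.posSemidef
  have hss : s * s = A := psqrt_mul_self' hA.posSemidef
  have hsPD : s.PosDef := pd_of_sq' hs (by rw [hss]; exact hA)
  rw [hs_eq] at hr
  have hr' : r = s - (1/2 : ℝ) • ϖ := by rw [hr]; module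
  have hcA : ϖ * A = A * ϖ := by rw [hAdef]; noncomm_ring
  have hcs : ϖ * s = s * ϖ := commute_sqrt' hA hϖH hcA
  set M : Matrix (Fin d) (Fin d) ℝ := s + (1/2 : ℝ) • ϖ with hMdef
  have hM : M.PosDef := Matrix.PosDef.posSemidef_add hs (pd_smul' (by norm_num) hϖ)
  have hMdet : IsUnit M.det := hM.det_pos.ne'.isUnit
  have hrM : r * M = ϖ := by
    rw [hr', hMdef]
    have h1 : (s - (1/2:ℝ)•ϖ) * (s + (1/2:ℝ)•ϖ)
        = s * s - ((1/2:ℝ)•ϖ) * ((1/2:ℝ)•ϖ) := by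
      noncomm_ring [hcs]
      module
    rw [h1, hss, hAdef]
    abel
  -- Part 1 : r is positive definite
  have hwpsd : ϖ.PosSemidef := hϖ.posSemidef
  set w : Matrix (Fin d) (Fin d) ℝ := psqrt ϖ with hwdef
  have hw : w.PosSemidef := psqrt_psd' hwpsd
  have hww : w * w = ϖ := psqrt_mul_self' hwpsd
  have hwPD : w.PosDef := pd_of_sq' hw (by rw [hww]; exact hϖ)
  have hwϖ : w * ϖ = ϖ * w := by rw [← hww]; noncomm_ring
  have hwϖϖ : w * (ϖ * ϖ) = (ϖ * ϖ) * w := by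
    calc w * (ϖ * ϖ) = (w * ϖ) * ϖ := by rw [Matrix.mul_assoc]
      _ = (ϖ * w) * ϖ := by rw [hwϖ]
      _ = ϖ * (w * ϖ) := by rw [Matrix.mul_assoc]
      _ = ϖ * (ϖ * w) := by rw [hwϖ]
      _ = (ϖ * ϖ) * w := by rw [Matrix.mul_assoc]
  have hwA : w * A = A * w := by
    rw [hAdef, h14, Matrix.mul_add, Matrix.add_mul, Matrix.mul_smul, Matrix.smul_mul, hwϖ, hwϖϖ]
  have hws : w * s = s * w := commute_sqrt' hA hw.1 hwA
  have hwM : w * M = M * w := by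
    rw [hMdef]
    noncomm_ring [hws, hwϖ]
  have hwMinv : w * M⁻¹ = M⁻¹ * w := commute_inv' hMdet hwM
  have hrPD : r.PosDef := by
    have hreq : r = wᴴ * M⁻¹ * w := by
      rw [hw.1]
      calc r = r * (M * M⁻¹) := by rw [Matrix.mul_nonsing_inv _ hMdet, mul_one]
        _ = (r * M) * M⁻¹ := by rw [Matrix.mul_assoc]
        _ = ϖ * M⁻¹ := by rw [hrM]
        _ = (w * w) * M⁻¹ := by rw [hww]
        _ = w * (w * M⁻¹) := by rw [Matrix.mul_assoc]
        _ = w * (M⁻¹ * w) := by rw [hwMinv]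
        _ = w * M⁻¹ * w := by rw [Matrix.mul_assoc]
    rw [hreq]
    exact pd_conj' hM.inv hwPD.det_pos.ne'.isUnit
  -- Part 2 : 1 - r is positive semidefinite
  have h2 : ((1 : Matrix (Fin d) (Fin d) ℝ) - r).PosSemidef := by
    have hQH : ((1 : Matrix (Fin d) (Fin d) ℝ) + (1/2:ℝ)•ϖ)ᴴ = 1 + (1/2:ℝ)•ϖ := by
      rw [conjTranspose_add, conjTranspose_one, conjTranspose_smul, hϖH]
      norm_num
    have hcomm : s * (1 + (1/2:ℝ)•ϖ) = (1 + (1/2:ℝ)•ϖ) * s := by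
      noncomm_ring [hcs]
    have hE : ((1 + (1/2:ℝ)•ϖ) + s).PosDef :=
      (Matrix.PosDef.one.add (pd_smul' (by norm_num) hϖ)).add_posSemidef hs
    have hG : ((1 + (1/2:ℝ)•ϖ) * (1 + (1/2:ℝ)•ϖ) - s * s).PosSemidef := by
      rw [hss, hAdef]
      have hGeq : (1 + (1/2:ℝ)•ϖ) * (1 + (1/2:ℝ)•ϖ) - (ϖ + ((1/2:ℝ)•ϖ) * ((1/2:ℝ)•ϖ))
          = (1 : Matrix (Fin d) (Fin d) ℝ) := by
        noncomm_ring
        module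
      rw [hGeq]
      exact Matrix.PosSemidef.one
    have key := sub_psd' hs.1 hQH hcomm hE hG
    have heq : (1 : Matrix (Fin d) (Fin d) ℝ) - r = (1 + (1/2:ℝ)•ϖ) - s := by
      rw [hr']; module
    rw [heq]
    exact key
  -- Part 3 : r - (1 + ϖ⁻¹)⁻¹ is positive semidefinite
  have hϖdet : IsUnit ϖ.det := hϖ.det_pos.ne'.isUnit
  set u : Matrix (Fin d) (Fin d) ℝ := 1 + ϖ with hudef
  have hu : u.PosDef := Matrix.PosDef.one.add hϖ
  have hudet : IsUnit u.det := hu.det_pos.ne'.isUnit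
  have huN : u * u⁻¹ = 1 := Matrix.mul_nonsing_inv u hudet
  have hNu : u⁻¹ * u = 1 := Matrix.nonsing_inv_mul u hudet
  set N : Matrix (Fin d) (Fin d) ℝ := u⁻¹ with hNdef
  have hN : N.PosDef := hu.inv
  have hNH : Nᴴ = N := hN.1
  have hϖu : ϖ * u = u * ϖ := by rw [hudef]; noncomm_ring
  have hϖN : ϖ * N = N * ϖ := commute_inv' hudet hϖu
  have hsu : s * u = u * s := by rw [hudef]; noncomm_ring [hcs]
  have hsN : s * N = N * s := commute_inv' hudet hsu
  set P : Matrix (Fin d) (Fin d) ℝ := ϖ * N + (1/2:ℝ)•ϖ with hPdef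
  have hPH : Pᴴ = P := by
    rw [hPdef, conjTranspose_add, conjTranspose_mul, conjTranspose_smul, star_trivial,
      hNH, hϖH, ← hϖN]
  have hPs : P * s = s * P := by
    rw [hPdef]
    have c1 : Commute s (ϖ * N) := Commute.mul_right hcs.symm hsN
    have c2 : Commute s ((1/2:ℝ)•ϖ) := Commute.smul_right hcs.symm _
    exact ((c1.add_right c2)).symm
  have hPPD : P.PosDef := (pd_mul' hϖ hN hϖN).add_posSemidef (pd_smul' (by norm_num) hϖ).posSemidef
  have hE3 : (s + P).PosDef := Matrix.PosDef.posSemidef_add hs hPPD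
  have hG3 : (s * s - P * P).PosSemidef := by
    have huϖ : u * ϖ = ϖ + ϖ * ϖ := by rw [hudef]; noncomm_ring
    have huP : u * P = ϖ + (1/2:ℝ) • (ϖ + ϖ * ϖ) := by
      rw [hPdef]
      have h1 : u * (ϖ * N) = ϖ := by
        calc u * (ϖ * N) = (u * ϖ) * N := by rw [Matrix.mul_assoc]
          _ = (ϖ * u) * N := by rw [hϖu]
          _ = ϖ * (u * N) := by rw [Matrix.mul_assoc]
          _ = ϖ := by rw [huN, mul_one]
      rw [Matrix.mul_add, h1, Matrix.mul_smul, huϖ]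
    have hPu : P * u = ϖ + (1/2:ℝ) • (ϖ + ϖ * ϖ) := by
      rw [hPdef]
      have h1 : (ϖ * N) * u = ϖ := by
        calc (ϖ * N) * u = ϖ * (N * u) := by rw [Matrix.mul_assoc]
          _ = ϖ := by rw [hNu, mul_one]
      have hϖu' : ϖ * u = ϖ + ϖ * ϖ := by rw [hϖu, huϖ]
      rw [Matrix.add_mul, h1, Matrix.smul_mul, hϖu']
    have hstep : u * (s * s - P * P) * u = ϖ := by
      have expand : u * (s * s - P * P) * u = u * A * u - (u * P) * (P * u) := by
        rw [hss]; noncomm_ring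
      rw [expand, huP, hPu, hAdef, hudef]
      noncomm_ring
      module
    have hsand : s * s - P * P = Nᴴ * ϖ * N := by
      rw [hNH, ← hstep]
      calc s * s - P * P
          = (N * u) * (s * s - P * P) * (u * N) := by rw [hNu, huN, one_mul, mul_one]
        _ = N * (u * (s * s - P * P) * u) * N := by simp only [Matrix.mul_assoc]
    rw [hsand]
    exact hϖ.posSemidef.conjTranspose_mul_mul_same N
  have key3 := sub_psd' hPH hs.1 hPs hE3 hG3
  have hinv : (1 + ϖ⁻¹)⁻¹ = ϖ * N := by
    have h1 : (1 : Matrix (Fin d) (Fin d) ℝ) + ϖ⁻¹ = ϖ⁻¹ * u := by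
      rw [hudef, Matrix.mul_add, Matrix.nonsing_inv_mul _ hϖdet, mul_one, add_comm]
    rw [h1, Matrix.mul_inv_rev, Matrix.nonsing_inv_nonsing_inv _ hϖdet, ← hNdef, ← hϖN]
  have heq3 : r - (1 + ϖ⁻¹)⁻¹ = s - P := by
    rw [hinv, hr', hPdef]; abel
  have h3 : (r - (1 + ϖ⁻¹)⁻¹).PosSemidef := by rw [heq3]; exact key3
  -- Part 4 : fixed point
  have hϖr : ϖ + r = M := by rw [hr', hMdef]; module
  set V : Matrix (Fin d) (Fin d) ℝ := M + 1 with hVdef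
  have hV : V.PosDef := hM.add_posSemidef Matrix.PosSemidef.one
  have hVdet : IsUnit V.det := hV.det_pos.ne'.isUnit
  have hrV : r * V = M := by
    calc r * V = r * M + r := by rw [hVdef]; noncomm_ring
      _ = ϖ + r := by rw [hrM]
      _ = M := hϖr
  have hr_eq : r = M * V⁻¹ := by
    calc r = r * (V * V⁻¹) := by rw [Matrix.mul_nonsing_inv _ hVdet, mul_one]
      _ = (r * V) * V⁻¹ := by rw [Matrix.mul_assoc]
      _ = M * V⁻¹ := by rw [hrV]
  have hMV : M * V = V * M := by rw [hVdef]; noncomm_ring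
  have h4 : r = (1 + (ϖ + r)⁻¹)⁻¹ := by
    rw [hϖr]
    have h1pM : (1 : Matrix (Fin d) (Fin d) ℝ) + M⁻¹ = M⁻¹ * V := by
      rw [hVdef, Matrix.mul_add, Matrix.nonsing_inv_mul _ hMdet, mul_one, add_comm]
    rw [h1pM, Matrix.mul_inv_rev, Matrix.nonsing_inv_nonsing_inv _ hMdet, hr_eq,
      commute_inv' hVdet hMV]
  exact ⟨hrPD, h2, h3, h4⟩
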